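/- For any three points p, q, r in the Euclidean plane and any real h > 0, the right prism of height h over the triangle pqr satisfies (2(‖p−q‖ + ‖q−r‖ + ‖r−p‖) + 3h)³ ≥ 972·√3 · A·h, where A is the two-dimensional Lebesgue measure of convexHull {p, q, r}. Equivalently, every triangular right prism has Melzak ratio at least 972√3 = (2^{2/3}·3^{11/6})³, the value attained by the conjectured minimizer. -/

import Mathlib

open MeasureTheory Pointwise

private noncomputable def bb := (EuclideanSpace.basisFun (Fin 2) ℝ).toBasis

private lemma mem_tri {u v x : EuclideanSpace ℝ (Fin 2)}
    (hx : x ∈ convexHull ℝ ({0, u, v} : Set (EuclideanSpace ℝ (Fin 2)))) :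
    ∃ s t : ℝ, 0 ≤ s ∧ 0 ≤ t ∧ s + t ≤ 1 ∧ x = s • u + t • v := by
  rw [convexHull_insert ⟨u, by simp⟩, mem_convexJoin] at hx
  obtain ⟨o, ho, z, hz, hxz⟩ := hx
  rw [Set.mem_singleton_iff] at ho; subst ho
  rw [convexHull_pair, segment_eq_image] at hz
  obtain ⟨a, ha, rfl⟩ := hz
  rw [segment_eq_image] at hxz
  obtain ⟨t, ht, rfl⟩ := hxz
  refine ⟨t * (1 - a), t * a, mul_nonneg ht.1 (by linarith [ha.2]), mul_nonneg ht.1 ha.1, ?_, ?_⟩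
  · nlinarith [ht.2]
  · simp [smul_add, smul_smul]

private lemma seg_vol_zero (u v : EuclideanSpace ℝ (Fin 2)) : volume (segment ℝ u v) = 0 := by
  have hsub : segment ℝ u v ⊆ (affineSpan ℝ ({u, v} : Set (EuclideanSpace ℝ (Fin 2))) : Set _) := by
    rw [← convexHull_pair]
    exact convexHull_subset_affineSpan _
  refine measure_mono_null hsub (Measure.addHaar_affineSubspace volume _ ?_)
  intro htop
  have hd := congrArg AffineSubspace.direction htop
  rw [AffineSubspace.direction_top, direction_affineSpan, vectorSpan_pair] at hd
  have h1 : Module.finrank ℝ (ℝ ∙ (u -ᵥ v)) ≤ 1 := by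
    have := finrank_span_le_card (R := ℝ) ({u -ᵥ v} : Set (EuclideanSpace ℝ (Fin 2)))
    simpa using this
  rw [hd, finrank_top, finrank_euclideanSpace_fin] at h1
  omega

private lemma tri_area_le (u v : EuclideanSpace ℝ (Fin 2)) :
    (volume (convexHull ℝ ({0, u, v} : Set (EuclideanSpace ℝ (Fin 2))))).toReal ≤
      |u 0 * v 1 - u 1 * v 0| / 2 := by
  set d : ℝ := u 0 * v 1 - u 1 * v 0 with hd
  set T : Set (EuclideanSpace ℝ (Fin 2)) := convexHull ℝ ({0, u, v} : Set (EuclideanSpace ℝ (Fin 2))) with hT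
  set f := Matrix.toLin bb bb !![u 0, v 0; u 1, v 1] with hfdef
  have hbase : ∀ w : EuclideanSpace ℝ (Fin 2), w = w 0 • bb 0 + w 1 • bb 1 := by
    intro w
    ext i
    fin_cases i <;>
      simp [bb, PiLp.add_apply, PiLp.smul_apply, EuclideanSpace.basisFun_apply,
        EuclideanSpace.single_apply]
  have h0 : f (bb 0) = u := by
    rw [hfdef, Matrix.toLin_self]
    ext i
    fin_cases i <;>
      simp [bb, Fin.sum_univ_two, PiLp.add_apply, PiLp.smul_apply,
        EuclideanSpace.basisFun_apply, EuclideanSpace.single_apply]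
  have h1 : f (bb 1) = v := by
    rw [hfdef, Matrix.toLin_self]
    ext i
    fin_cases i <;>
      simp [bb, Fin.sum_univ_two, PiLp.add_apply, PiLp.smul_apply,
        EuclideanSpace.basisFun_apply, EuclideanSpace.single_apply]
  have hdet : LinearMap.det f = d := by
    rw [hfdef, LinearMap.det_toLin, Matrix.det_fin_two_of, hd]; ring
  set cube : Set (EuclideanSpace ℝ (Fin 2)) := {x : EuclideanSpace ℝ (Fin 2) | ∀ i, x i ∈ Set.Icc (0:ℝ) 1} with hcubedef
  have hcube : volume cube = 1 := by
    have := (EuclideanSpace.volume_preserving_symm_measurableEquiv_toLp (Fin 2)).measure_preimage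
      (s := Set.univ.pi fun _ : Fin 2 => Set.Icc (0:ℝ) 1)
      (MeasurableSet.univ_pi (fun _ => measurableSet_Icc)).nullMeasurableSet
    rw [show (MeasurableEquiv.toLp 2 (Fin 2 → ℝ)).symm ⁻¹'
        (Set.univ.pi fun _ : Fin 2 => Set.Icc (0:ℝ) 1) = cube by
      ext x
      simp only [Set.mem_preimage, Set.mem_pi, Set.mem_univ, forall_true_left, hcubedef,
        Set.mem_setOf_eq]
      rfl] at this
    rw [this, volume_pi_pi]
    simp [Real.volume_Icc]
  have hPvol : volume (f '' cube) = ENNReal.ofReal |d| := by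
    rw [Measure.addHaar_image_linearMap, hdet, hcube, mul_one]
  have hmemP : ∀ s t : ℝ, 0 ≤ s → 0 ≤ t → s ≤ 1 → t ≤ 1 → s • u + t • v ∈ f '' cube := by
    intro s t hs ht hs1 ht1
    refine ⟨s • bb 0 + t • bb 1, ?_, ?_⟩
    · intro i
      fin_cases i <;>
        simp [bb, PiLp.add_apply, PiLp.smul_apply, EuclideanSpace.basisFun_apply,
          EuclideanSpace.single_apply, hs, ht, hs1, ht1]
    · simp [map_add, _root_.map_smul, h0, h1]
  have hTsub : T ⊆ f '' cube := by
    intro x hx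
    obtain ⟨s, t, hs, ht, hst, rfl⟩ := mem_tri hx
    exact hmemP s t hs ht (by linarith) (by linarith)
  set W : Set (EuclideanSpace ℝ (Fin 2)) := (u + v) +ᵥ (-T) with hW
  have hWmem : ∀ x : EuclideanSpace ℝ (Fin 2), x ∈ W ↔ ∃ y ∈ T, x = (u + v) - y := by
    intro x
    simp only [hW, Set.mem_vadd_set, Set.mem_neg, vadd_eq_add]
    constructor
    · rintro ⟨y, hy, rfl⟩
      exact ⟨-y, hy, by abel⟩
    · rintro ⟨y, hy, rfl⟩
      exact ⟨-y, by simpa using hy, by abel⟩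
  have hWsub : W ⊆ f '' cube := by
    intro x hx
    obtain ⟨y, hy, rfl⟩ := (hWmem x).1 hx
    obtain ⟨s, t, hs, ht, hst, rfl⟩ := mem_tri hy
    have : (u + v) - (s • u + t • v) = (1 - s) • u + (1 - t) • v := by
      simp [sub_smul, one_smul]; abel
    rw [this]
    exact hmemP _ _ (by linarith) (by linarith) (by linarith) (by linarith)
  have hTcomp : IsCompact T :=
    (((Set.finite_singleton v).insert u).insert 0).isCompact_convexHull ℝ
  have hWcomp : IsCompact W := by
    have : W = (fun y => (u + v) - y) '' T := by
      ext x
      rw [hWmem]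
      constructor
      · rintro ⟨y, hy, rfl⟩; exact ⟨y, hy, rfl⟩
      · rintro ⟨y, hy, rfl⟩; exact ⟨y, hy, rfl⟩
    rw [this]
    exact hTcomp.image (by fun_prop)
  have hWvol : volume W = volume T := by
    rw [hW, measure_vadd, Measure.measure_neg]
  have hkey : volume T + volume T ≤ ENNReal.ofReal |d| := by
    by_cases hd0 : d = 0
    · have hT0 : volume T ≤ ENNReal.ofReal |d| := hPvol ▸ measure_mono hTsub
      rw [hd0] at hT0 ⊢
      simp only [abs_zero, ENNReal.ofReal_zero, nonpos_iff_eq_zero] at hT0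
      simp [hT0]
    -- d ≠ 0 : the two triangles overlap only on the diagonal segment
    have hinter : T ∩ W ⊆ segment ℝ u v := by
      rintro x ⟨hxT, hxW⟩
      obtain ⟨s, t, hs, ht, hst, hxe⟩ := mem_tri hxT
      obtain ⟨y, hy, hxy⟩ := (hWmem x).1 hxW
      obtain ⟨s', t', hs', ht', hst', hye⟩ := mem_tri hy
      have hxe2 : x = (1 - s') • u + (1 - t') • v := by
        rw [hxy, hye]
        simp [sub_smul, one_smul]; abel
      have heq : s • u + t • v = (1 - s') • u + (1 - t') • v := by rw [← hxe, ← hxe2]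
      have heq0 := congrFun (congrArg (fun z : EuclideanSpace ℝ (Fin 2) => (z : Fin 2 → ℝ)) heq) 0
      have heq1 := congrFun (congrArg (fun z : EuclideanSpace ℝ (Fin 2) => (z : Fin 2 → ℝ)) heq) 1
      simp only [PiLp.add_apply, PiLp.smul_apply, smul_eq_mul] at heq0 heq1
      have e0 : (s - (1 - s')) * u 0 + (t - (1 - t')) * v 0 = 0 := by linear_combination heq0
      have e1 : (s - (1 - s')) * u 1 + (t - (1 - t')) * v 1 = 0 := by linear_combination heq1
      have hα : (s - (1 - s')) * d = 0 := by rw [hd]; linear_combination v 1 * e0 - v 0 * e1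
      have hβ : (t - (1 - t')) * d = 0 := by rw [hd]; linear_combination u 0 * e1 - u 1 * e0
      have hss : s = 1 - s' := by
        rcases mul_eq_zero.mp hα with h | h
        · linarith [sub_eq_zero.mp (by linarith : s - (1 - s') = 0)]
        · exact absurd h hd0
      have htt : t = 1 - t' := by
        rcases mul_eq_zero.mp hβ with h | h
        · linarith
        · exact absurd h hd0
      have hsum : s + t = 1 := by
        have h1 : s + t ≥ 1 := by rw [hss, htt]; linarith
        linarith
      rw [segment_eq_image]
      refine ⟨t, ⟨ht, by linarith⟩, ?_⟩
      show (1 - t) • u + t • v = x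
      rw [hxe, show (1:ℝ) - t = s by linarith]
    calc volume T + volume T = volume T + volume W := by rw [hWvol]
      _ = volume (T ∪ W) + volume (T ∩ W) :=
          (measure_union_add_inter T hWcomp.isClosed.measurableSet).symm
      _ ≤ ENNReal.ofReal |d| + 0 := by
          refine add_le_add ?_ (le_of_eq (measure_mono_null hinter (seg_vol_zero u v)))
          exact hPvol ▸ measure_mono (Set.union_subset hTsub hWsub)
      _ = ENNReal.ofReal |d| := by rw [add_zero]
  have hfin : volume T ≠ ⊤ := hTcomp.measure_lt_top.ne
  have h2 : (volume T).toReal + (volume T).toReal ≤ |d| := by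
    have := ENNReal.toReal_le_of_le_ofReal (abs_nonneg d) hkey
    rwa [ENNReal.toReal_add hfin hfin] at this
  linarith


private lemma amgm3 {x y z : ℝ} (hx : 0 ≤ x) (hy : 0 ≤ y) (hz : 0 ≤ z) :
    27 * (x * y * z) ≤ (x + y + z) ^ 3 := by
  nlinarith [mul_nonneg hx hy, mul_nonneg hy hz, mul_nonneg hx hz,
    mul_nonneg (mul_nonneg hx hx) hx, mul_nonneg (mul_nonneg hy hy) hy,
    mul_nonneg (mul_nonneg hz hz) hz,
    mul_nonneg hx (sq_nonneg (y - z)), mul_nonneg hy (sq_nonneg (x - z)),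
    mul_nonneg hz (sq_nonneg (x - y))]

private lemma nsq (w : EuclideanSpace ℝ (Fin 2)) : ‖w‖ ^ 2 = w 0 ^ 2 + w 1 ^ 2 := by
  rw [EuclideanSpace.norm_eq, Real.sq_sqrt (by positivity)]
  simp [Fin.sum_univ_two, Real.norm_eq_abs, sq_abs]

/-- Every triangular right prism has Melzak ratio at least `972 √3`:
for a right prism of height `h > 0` over the triangle `p q r`, the cube of its
total edge length `2(‖p−q‖+‖q−r‖+‖r−p‖) + 3h` is at least `972 √3` times its
volume `A·h`, where `A` is the planar Lebesgue measure of `convexHull {p,q,r}`. -/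
theorem melzak_triangular_prism (p q r : EuclideanSpace ℝ (Fin 2)) (h : ℝ) (hh : 0 < h) :
    (2 * (‖p - q‖ + ‖q - r‖ + ‖r - p‖) + 3 * h) ^ 3 ≥
    972 * Real.sqrt 3 *
      ((MeasureTheory.volume
        (convexHull ℝ ({p, q, r} : Set (EuclideanSpace ℝ (Fin 2))))).toReal * h) := by
  classical
  set u : EuclideanSpace ℝ (Fin 2) := q - p with hu
  set v : EuclideanSpace ℝ (Fin 2) := r - p with hv
  -- translate the triangle to the origin
  have hset : ({p, q, r} : Set (EuclideanSpace ℝ (Fin 2))) =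
      p +ᵥ ({0, u, v} : Set (EuclideanSpace ℝ (Fin 2))) := by
    rw [← Set.image_vadd, Set.image_insert_eq, Set.image_insert_eq, Set.image_singleton]
    rw [show p +ᵥ (0 : EuclideanSpace ℝ (Fin 2)) = p by simp [vadd_eq_add],
      show p +ᵥ u = q by rw [hu, vadd_eq_add]; abel,
      show p +ᵥ v = r by rw [hv, vadd_eq_add]; abel]
  have hvol : MeasureTheory.volume
      (convexHull ℝ ({p, q, r} : Set (EuclideanSpace ℝ (Fin 2)))) =
      MeasureTheory.volume (convexHull ℝ ({0, u, v} : Set (EuclideanSpace ℝ (Fin 2)))) := by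
    rw [hset, convexHull_vadd, measure_vadd]
  set A : ℝ := (MeasureTheory.volume
      (convexHull ℝ ({p, q, r} : Set (EuclideanSpace ℝ (Fin 2))))).toReal with hA
  set d : ℝ := u 0 * v 1 - u 1 * v 0 with hd
  have hAd : A ≤ |d| / 2 := by
    rw [hA, hvol]
    exact tri_area_le u v
  have hA0 : 0 ≤ A := ENNReal.toReal_nonneg
  set a : ℝ := ‖p - q‖ with ha
  set b : ℝ := ‖q - r‖ with hb
  set c : ℝ := ‖r - p‖ with hc
  have hau : a = ‖u‖ := by rw [ha, hu, norm_sub_rev]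
  have hbu : b = ‖u - v‖ := by rw [hb, hu, hv]; congr 1; abel
  have hcu : c = ‖v‖ := by rw [hc, hv, norm_sub_rev]
  have ha0 : 0 ≤ a := norm_nonneg _
  have hb0 : 0 ≤ b := norm_nonneg _
  have hc0 : 0 ≤ c := norm_nonneg _
  have ha2 : a ^ 2 = u 0 ^ 2 + u 1 ^ 2 := by rw [hau]; exact nsq u
  have hc2 : c ^ 2 = v 0 ^ 2 + v 1 ^ 2 := by rw [hcu]; exact nsq v
  have hb2 : b ^ 2 = (u 0 - v 0) ^ 2 + (u 1 - v 1) ^ 2 := by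
    rw [hbu, nsq (u - v)]; simp [PiLp.sub_apply]
  -- Heron: 4 d² = 4a²c² − (a²+c²−b²)²
  have heron : 4 * d ^ 2 = 4 * a ^ 2 * c ^ 2 - (a ^ 2 + c ^ 2 - b ^ 2) ^ 2 := by
    rw [ha2, hb2, hc2, hd]; ring
  -- triangle inequalities
  have htr1 : b ≤ a + c := by rw [hau, hbu, hcu]; exact norm_sub_le u v
  have htr2 : a ≤ b + c := by
    rw [hau, hbu, hcu]
    have h1 := norm_add_le (u - v) v
    rw [show u - v + v = u by abel] at h1
    exact h1
  have htr3 : c ≤ a + b := by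
    rw [hau, hbu, hcu]
    have h1 := norm_add_le (v - u) u
    rw [show v - u + u = v by abel] at h1
    have h2 : ‖v - u‖ = ‖u - v‖ := norm_sub_rev _ _
    linarith
  have hgm := amgm3 (x := -a + b + c) (y := a - b + c) (z := a + b - c)
    (by linarith) (by linarith) (by linarith)
  have hheron2 : 4 * d ^ 2 = (a + b + c) * ((-a + b + c) * ((a - b + c) * (a + b - c))) := by
    linear_combination heron
  have hL0 : (0:ℝ) ≤ a + b + c := by linarith
  have h108 : 108 * d ^ 2 ≤ (a + b + c) ^ 4 := by
    have h27 := mul_le_mul_of_nonneg_left hgm hL0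
    calc 108 * d ^ 2 = 27 * (4 * d ^ 2) := by ring
      _ = (a + b + c) * (27 * ((-a + b + c) * (a - b + c) * (a + b - c))) := by
          rw [hheron2]; ring
      _ ≤ (a + b + c) * ((-a + b + c) + (a - b + c) + (a + b - c)) ^ 3 := h27
      _ = (a + b + c) ^ 4 := by ring
  set s3 : ℝ := Real.sqrt 3 with hs3def
  have hs3 : s3 ^ 2 = 3 := Real.sq_sqrt (by norm_num)
  have hs3n : 0 ≤ s3 := Real.sqrt_nonneg 3
  have hd3 : 6 * s3 * |d| ≤ (a + b + c) ^ 2 := by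
    have hsq : (6 * s3 * |d|) ^ 2 = 108 * d ^ 2 := by
      rw [mul_pow, mul_pow, hs3, sq_abs]; ring
    calc 6 * s3 * |d| = Real.sqrt ((6 * s3 * |d|) ^ 2) :=
          (Real.sqrt_sq (by positivity)).symm
      _ ≤ Real.sqrt (((a + b + c) ^ 2) ^ 2) := by
          apply Real.sqrt_le_sqrt
          rw [hsq]
          calc 108 * d ^ 2 ≤ (a + b + c) ^ 4 := h108
            _ = ((a + b + c) ^ 2) ^ 2 := by ring
      _ = (a + b + c) ^ 2 := Real.sqrt_sq (sq_nonneg _)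
  have hAMGM := amgm3 hL0 hL0 (by linarith : (0:ℝ) ≤ 3 * h)
  have e1 : 972 * s3 * (A * h) ≤ 972 * s3 * ((|d| / 2) * h) := by
    have h1 : A * h ≤ (|d| / 2) * h := mul_le_mul_of_nonneg_right hAd hh.le
    have h2 : (0:ℝ) ≤ 972 * s3 := by positivity
    exact mul_le_mul_of_nonneg_left h1 h2
  have e3 : 81 * ((6 * s3 * |d|) * h) ≤ 81 * ((a + b + c) ^ 2 * h) := by
    have := mul_le_mul_of_nonneg_right hd3 hh.le
    linarith
  have e4 : 81 * ((a + b + c) ^ 2 * h) ≤ (2 * (a + b + c) + 3 * h) ^ 3 := by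
    calc 81 * ((a + b + c) ^ 2 * h) = 27 * ((a + b + c) * (a + b + c) * (3 * h)) := by ring
      _ ≤ ((a + b + c) + (a + b + c) + 3 * h) ^ 3 := hAMGM
      _ = (2 * (a + b + c) + 3 * h) ^ 3 := by ring
  calc 972 * s3 * (A * h) ≤ 972 * s3 * ((|d| / 2) * h) := e1
    _ = 81 * ((6 * s3 * |d|) * h) := by ring
    _ ≤ 81 * ((a + b + c) ^ 2 * h) := e3
    _ ≤ (2 * (a + b + c) + 3 * h) ^ 3 := e4
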